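/- Let G = (V,E) be a finite connected graph and let Ġ = (V̇, Ė) be its 'dotted' graph, obtained by subdividing each edge of G with one new midpoint vertex; declare old vertices odd and midpoint vertices even. Then restriction to the old vertices V is a surjection from the set of graph homomorphisms g: V̇ → ℤ (|g(u)-g(v)|=1 on edges of Ġ, parity matching the bipartition) onto the set of height functions h: V → 2ℤ+1 with |h(v)-h(w)| ≤ 2 on edges of G. Moreover, the number of homomorphisms g restricting to a given h equals 2^{#{e=⟨v,w⟩∈E : h(v)=h(w)}}, so the restriction of a uniform random homomorphism (with boundary condition ξ on Δ ⊆ V) has the law of the random Lipschitz model on G with constant edge weight c = 2 and the same boundary condition. -/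

import Mathlib

/-- The dotted graph of `G`: each edge of `G` is subdivided by one midpoint vertex. -/
def dottedGraph {V : Type*} (G : SimpleGraph V) : SimpleGraph (V ⊕ G.edgeSet) where
  Adj x y :=
    (∃ (v : V) (e : G.edgeSet), x = Sum.inl v ∧ y = Sum.inr e ∧ v ∈ (e : Sym2 V)) ∨
    (∃ (v : V) (e : G.edgeSet), x = Sum.inr e ∧ y = Sum.inl v ∧ v ∈ (e : Sym2 V))
  symm := by
    constructor
    rintro x y (⟨v, e, rfl, rfl, hm⟩ | ⟨v, e, rfl, rfl, hm⟩)
    · exact Or.inr ⟨v, e, rfl, rfl, hm⟩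
    · exact Or.inl ⟨v, e, rfl, rfl, hm⟩
  loopless := by
    constructor
    rintro x (⟨v, e, rfl, hy, hm⟩ | ⟨v, e, rfl, hy, hm⟩) <;> cases hy

/-- A graph homomorphism to `ℤ` on the dotted graph: odd on the original vertices, even on
the midpoints, and changing by exactly one along each edge. -/
def IsDotHom {V : Type*} (G : SimpleGraph V) (g : V ⊕ G.edgeSet → ℤ) : Prop :=
  (∀ v : V, Odd (g (Sum.inl v))) ∧ (∀ e : G.edgeSet, Even (g (Sum.inr e))) ∧
    ∀ x y, (dottedGraph G).Adj x y → |g x - g y| = 1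

/-- A height function: odd-valued and changing by at most 2 along edges. -/
def IsHeight {V : Type*} (G : SimpleGraph V) (h : V → ℤ) : Prop :=
  (∀ v, Odd (h v)) ∧ ∀ v w, G.Adj v w → |h v - h w| ≤ 2

section Aux
variable {V : Type*} {G : SimpleGraph V}

def Hmax (h : V → ℤ) : Sym2 V → ℤ := Sym2.lift ⟨fun v w => max (h v) (h w), fun _ _ => max_comm _ _⟩

@[simp] lemma Hmax_mk (h : V → ℤ) (v w : V) : Hmax h s(v, w) = max (h v) (h w) := rfl

lemma hmax_odd {h : V → ℤ} (hodd : ∀ v, Odd (h v)) (s : Sym2 V) : Odd (Hmax h s) := by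
  induction s using Sym2.ind with
  | _ v w =>
    rw [Hmax_mk]
    rcases max_cases (h v) (h w) with ⟨hc, _⟩ | ⟨hc, _⟩ <;> rw [hc] <;> [exact hodd v; exact hodd w]

/-- The midpoint value `Hmax - 1` is at distance 1 from each endpoint. -/
lemma abs_sub_hmax {h : V → ℤ} (hh : IsHeight G h) (v : V) (e : G.edgeSet)
    (hm : v ∈ (e : Sym2 V)) : |h v - (Hmax h e.1 - 1)| = 1 := by
  obtain ⟨hodd, hlip⟩ := hh
  obtain ⟨s, hs⟩ := e
  obtain ⟨w, rfl⟩ := Sym2.mem_iff_exists.mp hm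
  have hadj : G.Adj v w := hs
  have h2 := abs_le.mp (hlip v w hadj)
  obtain ⟨a, ha⟩ := hodd v
  obtain ⟨b, hb⟩ := hodd w
  rw [Hmax_mk]
  rcases le_total (h v) (h w) with hle | hle
  · rw [max_eq_right hle, abs_eq (by norm_num : (0:ℤ) ≤ 1)]; omega
  · rw [max_eq_left hle, abs_eq (by norm_num : (0:ℤ) ≤ 1)]; omega

lemma exists_extension {h : V → ℤ} (hh : IsHeight G h) :
    ∃ g : V ⊕ G.edgeSet → ℤ, IsDotHom G g ∧ ∀ v, g (Sum.inl v) = h v := by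
  refine ⟨Sum.elim h (fun e => Hmax h e.1 - 1), ⟨fun v => hh.1 v, ?_, ?_⟩, fun v => rfl⟩
  · intro e
    simpa using (hmax_odd hh.1 e.1).sub_odd odd_one
  · rintro x y (⟨v, e, rfl, rfl, hm⟩ | ⟨v, e, rfl, rfl, hm⟩)
    · simpa using abs_sub_hmax hh v e hm
    · rw [abs_sub_comm]; simpa using abs_sub_hmax hh v e hm

lemma hmax_eq_of_const {h : V → ℤ} {s : Sym2 V} (hc : ∀ v ∈ s, ∀ w ∈ s, h v = h w)
    {v : V} (hm : v ∈ s) : Hmax h s = h v := by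
  induction s using Sym2.ind with
  | _ a b =>
    rw [Hmax_mk]
    have hab : h a = h b := hc a (Sym2.mem_mk_left a b) b (Sym2.mem_mk_right a b)
    rcases Sym2.mem_iff.mp hm with rfl | rfl <;> omega

variable [Fintype V] [DecidableEq V] [DecidableRel G.Adj]

lemma count_extension {h : V → ℤ} (hh : IsHeight G h) :
    {g : V ⊕ G.edgeSet → ℤ | IsDotHom G g ∧ ∀ v, g (Sum.inl v) = h v}.ncard
      = 2 ^ (G.edgeFinset.filter fun e => ∀ v ∈ e, ∀ w ∈ e, h v = h w).card := by
  classical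
  set P : Sym2 V → Prop := fun e => ∀ v ∈ e, ∀ w ∈ e, h v = h w with hPdef
  set S := {g : V ⊕ G.edgeSet → ℤ | IsDotHom G g ∧ ∀ v, g (Sum.inl v) = h v} with hSdef
  have key : ∀ g ∈ S, ∀ (e : G.edgeSet), ∀ v ∈ (e : Sym2 V),
      |h v - g (Sum.inr e)| = 1 := by
    rintro g ⟨⟨_, _, hadj⟩, hres⟩ e v hm
    have := hadj (Sum.inl v) (Sum.inr e) (Or.inl ⟨v, e, rfl, rfl, hm⟩)
    rwa [hres v] at this
  have key2 : ∀ g ∈ S, ∀ (s : Sym2 V) (hs : s ∈ G.edgeSet),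
      (P s → (g (Sum.inr ⟨s, hs⟩) = Hmax h s + 1 ∨ g (Sum.inr ⟨s, hs⟩) = Hmax h s - 1)) ∧
      (¬ P s → g (Sum.inr ⟨s, hs⟩) = Hmax h s - 1) := by
    intro g hg s
    induction s using Sym2.ind with
    | _ v w =>
      intro hs
      have hv := key g hg ⟨s(v,w), hs⟩ v (Sym2.mem_mk_left v w)
      have hw := key g hg ⟨s(v,w), hs⟩ w (Sym2.mem_mk_right v w)
      rw [abs_eq (by norm_num : (0:ℤ) ≤ 1)] at hv hw
      constructor
      · intro hP
        have h1 : Hmax h s(v,w) = h v := hmax_eq_of_const hP (Sym2.mem_mk_left v w)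
        rw [h1]; omega
      · intro hP
        have hne : h v ≠ h w := by
          intro hvw
          apply hP
          intro a ha b hb
          rcases Sym2.mem_iff.mp ha with rfl | rfl <;> rcases Sym2.mem_iff.mp hb with rfl | rfl <;>
            omega
        rw [Hmax_mk]
        rcases le_total (h v) (h w) with hle | hle
        · rw [max_eq_right hle]; omega
        · rw [max_eq_left hle]; omega
  have main : Nat.card S =
      Nat.card ({e : G.edgeSet // P e.1} → Bool) := by
    refine Nat.card_congr ⟨fun g e => decide (Hmax h e.1.1 < g.1 (Sum.inr e.1)),
      fun b => ⟨Sum.elim h (fun e => if hPe : P e.1 then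
        (if b ⟨e, hPe⟩ then Hmax h e.1 + 1 else Hmax h e.1 - 1) else Hmax h e.1 - 1),
        ?_⟩, ?_, ?_⟩
    · refine ⟨⟨fun v => hh.1 v, ?_, ?_⟩, fun v => rfl⟩
      · intro e
        simp only [Sum.elim_inr]
        split_ifs <;> simp [(hmax_odd hh.1 e.1).add_one, (hmax_odd hh.1 e.1).sub_odd odd_one]
      · have keyv : ∀ (v : V) (e : G.edgeSet), v ∈ (e : Sym2 V) →
            |h v - (if hPe : P e.1 then
              (if b ⟨e, hPe⟩ then Hmax h e.1 + 1 else Hmax h e.1 - 1)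
              else Hmax h e.1 - 1)| = 1 := by
          intro v e hm
          split_ifs with hPe hb
          · rw [hmax_eq_of_const hPe hm]; simp
          · exact abs_sub_hmax hh v e hm
          · exact abs_sub_hmax hh v e hm
        rintro x y (⟨v, e, rfl, rfl, hm⟩ | ⟨v, e, rfl, rfl, hm⟩)
        · simpa using keyv v e hm
        · rw [abs_sub_comm]; simpa using keyv v e hm
    · rintro ⟨g, hg⟩
      apply Subtype.ext
      funext x
      cases x with
      | inl v => exact (hg.2 v).symm
      | inr e =>
        obtain ⟨s, hs⟩ := e
        have hcoe : ((⟨s, hs⟩ : G.edgeSet) : Sym2 V) = s := rfl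
        simp only [Sum.elim_inr, hcoe]
        split_ifs with hPe hb
        · rcases (key2 g hg s hs).1 hPe with h1 | h1
          · exact h1.symm
          · exfalso; simp only [decide_eq_true_eq, hcoe] at hb; omega
        · rcases (key2 g hg s hs).1 hPe with h1 | h1
          · exfalso; simp only [decide_eq_true_eq, hcoe] at hb; omega
          · exact h1.symm
        · exact ((key2 g hg s hs).2 hPe).symm
    · intro b
      funext e
      obtain ⟨e', hPe⟩ := e
      simp only [Sum.elim_inr, dif_pos hPe]
      cases hb : b ⟨e', hPe⟩ <;> simp [hb]
  haveI : Finite {e : G.edgeSet // P e.1} := Subtype.finite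
  have card1 : Nat.card {e : G.edgeSet // P e.1} = (G.edgeFinset.filter P).card := by
    rw [← Nat.card_eq_finsetCard]
    apply Nat.card_congr
    refine (Equiv.subtypeSubtypeEquivSubtypeInter (· ∈ G.edgeSet) P).trans
      (Equiv.subtypeEquivRight ?_)
    intro s
    simp [SimpleGraph.mem_edgeFinset, and_comm]
  have hbool : Nat.card Bool = 2 := by simp [Nat.card_eq_fintype_card]
  have hS : S.ncard = Nat.card S := rfl
  rw [hS, main, Nat.card_fun, hbool, card1]
end Aux

theorem stmt_10 {V : Type*} [Fintype V] [DecidableEq V] (G : SimpleGraph V)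
    [DecidableRel G.Adj] (hconn : G.Connected) (Δ : Set V) (ξ : V → ℤ) :
    (∀ h : V → ℤ, IsHeight G h →
      ∃ g : V ⊕ G.edgeSet → ℤ, IsDotHom G g ∧ ∀ v, g (Sum.inl v) = h v) ∧
    (∀ h : V → ℤ, IsHeight G h →
      {g : V ⊕ G.edgeSet → ℤ | IsDotHom G g ∧ ∀ v, g (Sum.inl v) = h v}.ncard
        = 2 ^ (G.edgeFinset.filter fun e => ∀ v ∈ e, ∀ w ∈ e, h v = h w).card) ∧
    (∀ h h' : V → ℤ, IsHeight G h → IsHeight G h' →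
      (∀ v ∈ Δ, h v = ξ v) → (∀ v ∈ Δ, h' v = ξ v) →
      ({g : V ⊕ G.edgeSet → ℤ | IsDotHom G g ∧ ∀ v, g (Sum.inl v) = h v}.ncard : ℤ) *
          2 ^ (G.edgeFinset.filter fun e => ∀ v ∈ e, ∀ w ∈ e, h' v = h' w).card
        = ({g : V ⊕ G.edgeSet → ℤ | IsDotHom G g ∧ ∀ v, g (Sum.inl v) = h' v}.ncard : ℤ) *
          2 ^ (G.edgeFinset.filter fun e => ∀ v ∈ e, ∀ w ∈ e, h v = h w).card) := by
  refine ⟨fun h hh => exists_extension hh, fun h hh => count_extension hh, ?_⟩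
  intro h h' hh hh' _ _
  rw [count_extension hh, count_extension hh']
  push_cast
  ring
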